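/- For a propositional formula φ and atoms p₁,...,pₙ listing sig(φ) \ σ, the QBF χ = ∃p₁⋯∃pₙ.φ satisfies: φ ⊨ χ, sig(χ) ⊆ σ, and for every propositional formula ψ with φ ⊨ ψ and sig(ψ) ∩ sig(φ) ⊆ σ, one has χ ⊨ ψ. -/

import Mathlib

inductive PropForm : Type where
  | var : ℕ → PropForm
  | tru : PropForm
  | fls : PropForm
  | neg : PropForm → PropForm
  | conj : PropForm → PropForm → PropForm
  | disj : PropForm → PropForm → PropForm
deriving DecidableEq

namespace PropForm

def eval (v : ℕ → Bool) : PropForm → Bool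
  | var p => v p
  | tru => true
  | fls => false
  | neg φ => !(eval v φ)
  | conj φ ψ => eval v φ && eval v ψ
  | disj φ ψ => eval v φ || eval v ψ

def sig : PropForm → Finset ℕ
  | var p => {p}
  | tru => ∅
  | fls => ∅
  | neg φ => sig φ
  | conj φ ψ => sig φ ∪ sig ψ
  | disj φ ψ => sig φ ∪ sig ψ

def impl (φ ψ : PropForm) : PropForm := disj (neg φ) ψ

def iff (φ ψ : PropForm) : PropForm := conj (impl φ ψ) (impl ψ φ)

end PropForm

/-- Semantic entailment: every model of `φ` is a model of `ψ`. -/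
def Entails (φ ψ : PropForm) : Prop :=
  ∀ v : ℕ → Bool, φ.eval v = true → ψ.eval v = true

/-- `satExistsF ps f v` holds iff `v ⊨ ∃ p₁ ⋯ ∃ pₙ. f` where `ps = [p₁,…,pₙ]`:
some valuation agreeing with `v` except possibly on the `pᵢ` satisfies `f`. -/
def satExistsF : List ℕ → ((ℕ → Bool) → Bool) → (ℕ → Bool) → Prop
  | [], f, v => f v = true
  | p :: ps, f, v => ∃ b : Bool, satExistsF ps f (Function.update v p b)

lemma satExistsF_of_true : ∀ (ps : List ℕ) (f : (ℕ → Bool) → Bool) (v : ℕ → Bool),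
    f v = true → satExistsF ps f v
  | [], f, v, h => h
  | p :: ps, f, v, h =>
    ⟨v p, by rw [Function.update_eq_self]; exact satExistsF_of_true ps f v h⟩

lemma satExistsF_elim : ∀ (ps : List ℕ) (f : (ℕ → Bool) → Bool) (v : ℕ → Bool),
    satExistsF ps f v → ∃ w : ℕ → Bool, (∀ q, q ∉ ps → w q = v q) ∧ f w = true
  | [], _, v, h => ⟨v, fun _ _ => rfl, h⟩
  | p :: ps, f, v, ⟨b, hb⟩ => by
    obtain ⟨w, hw, hfw⟩ := satExistsF_elim ps f _ hb
    refine ⟨w, fun q hq => ?_, hfw⟩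
    rw [hw q (fun h => hq (List.mem_cons_of_mem _ h)),
      Function.update_of_ne (fun h : q = p => hq (h ▸ List.mem_cons_self))]

lemma eval_congr (v w : ℕ → Bool) : ∀ φ : PropForm,
    (∀ q ∈ φ.sig, v q = w q) → φ.eval v = φ.eval w
  | .var p, h => h p (by simp [PropForm.sig])
  | .tru, _ => rfl
  | .fls, _ => rfl
  | .neg φ, h => by simp only [PropForm.eval]; rw [eval_congr v w φ h]
  | .conj φ ψ, h => by
      simp only [PropForm.eval]
      rw [eval_congr v w φ fun q hq => h q (Finset.mem_union_left _ hq),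
        eval_congr v w ψ fun q hq => h q (Finset.mem_union_right _ hq)]
  | .disj φ ψ, h => by
      simp only [PropForm.eval]
      rw [eval_congr v w φ fun q hq => h q (Finset.mem_union_left _ hq),
        eval_congr v w ψ fun q hq => h q (Finset.mem_union_right _ hq)]

/-- The existential closure `∃ p₁ ⋯ ∃ pₙ. φ` over the atoms `sig(φ) \ σ` is a
(QBF-level) uniform `σ`-interpolant for `φ`. -/
theorem exists_closure_uniform_interpolant (φ : PropForm) (σ : Finset ℕ)
    (hσ : σ ⊆ φ.sig) (ps : List ℕ) (hps : ps.toFinset = φ.sig \ σ) :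
    (∀ v : ℕ → Bool, φ.eval v = true → satExistsF ps φ.eval v) ∧
    (φ.sig \ ps.toFinset ⊆ σ) ∧
    (∀ ψ : PropForm, Entails φ ψ → ψ.sig ∩ φ.sig ⊆ σ →
      ∀ v : ℕ → Bool, satExistsF ps φ.eval v → ψ.eval v = true) := by
  refine ⟨fun v hv => satExistsF_of_true ps _ v hv, ?_, ?_⟩
  · rw [hps]
    intro q hq
    simp only [Finset.mem_sdiff, not_and, not_not] at hq
    exact hq.2 hq.1
  · intro ψ hent hsig v hsat
    obtain ⟨w, hw, hfw⟩ := satExistsF_elim ps _ v hsat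
    have hψ := hent w hfw
    rw [← hψ]
    apply eval_congr
    intro q hq
    refine (hw q fun hmem => ?_).symm
    have : q ∈ φ.sig \ σ := hps ▸ List.mem_toFinset.mpr hmem
    rw [Finset.mem_sdiff] at this
    exact this.2 (hsig (Finset.mem_inter.mpr ⟨hq, this.1⟩))
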